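/- Let A = (Q, Σ, Δ, q0, F) be a complete NFA with finite state set Q. Suppose there exist a state q ∈ Q and strings s0, s, s1 ∈ Σ* such that: (i) there is a run of A from q0 to q labeled by s0, (ii) there exist two distinct runs of A from q to q both labeled by s, and (iii) no run of A from q labeled by s1 ends in an accepting state. Then for every natural number k there exists a non-accepting state q_r ∈ Q \ F such that the number of distinct runs of A from q0 to q_r labeled by s0·s^k·s1 is at least 2^k / |Q|. -/

import Mathlib

/-- A nondeterministic finite automaton `A = (Q, Σ, Δ, q0, F)` with state type `Q`,
alphabet `A`, transition function `δ`, initial state `q0` and accepting states `F`. -/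
structure NFA' (Q A : Type*) where
  δ : Q → A → Set Q
  q0 : Q
  F : Set Q

namespace NFA'

variable {Q A : Type*}

/-- `ρ` is a run of the automaton labeled by the word `w`: the state sequence
`ρ 0, ρ 1, …, ρ |w|` follows transitions of `M` along the letters of `w`. -/
def IsRunOn (M : NFA' Q A) (w : List A) (ρ : Fin (w.length + 1) → Q) : Prop :=
  ∀ i : Fin w.length, ρ i.succ ∈ M.δ (ρ i.castSucc) (w.get i)

/-- The set of runs of `M` from `p` to `r` labeled by the word `w`,
represented by their state sequences. -/
def Runs (M : NFA' Q A) (p r : Q) (w : List A) : Set (Fin (w.length + 1) → Q) :=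
  {ρ | ρ 0 = p ∧ ρ (Fin.last w.length) = r ∧ M.IsRunOn w ρ}

end NFA'

/-- `wordPow s k` is the `k`-fold concatenation `s^k` of the word `s`. -/
def wordPow {A : Type*} (s : List A) : ℕ → List A
  | 0 => []
  | k + 1 => s ++ wordPow s k

section Aux

variable {Q A : Type*}

/-- Concatenation of two runs. -/
def runAppend (u v : List A) (ρ : Fin (u.length + 1) → Q) (σ : Fin (v.length + 1) → Q) :
    Fin ((u ++ v).length + 1) → Q :=
  fun i => if h : (i : ℕ) ≤ u.length then ρ ⟨i, by omega⟩
    else σ ⟨(i : ℕ) - u.length, by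
      have := i.2; simp only [List.length_append] at this; omega⟩

lemma runAppend_left (u v : List A) (ρ : Fin (u.length + 1) → Q) (σ : Fin (v.length + 1) → Q)
    (i : Fin ((u ++ v).length + 1)) (h : (i : ℕ) ≤ u.length) :
    runAppend u v ρ σ i = ρ ⟨i, by omega⟩ := by
  simp [runAppend, h]

lemma runAppend_right (u v : List A) (ρ : Fin (u.length + 1) → Q) (σ : Fin (v.length + 1) → Q)
    (i : Fin ((u ++ v).length + 1)) (h : ¬ (i : ℕ) ≤ u.length) :
    runAppend u v ρ σ i = σ ⟨(i : ℕ) - u.length, by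
      have := i.2; simp only [List.length_append] at this; omega⟩ := by
  simp [runAppend, h]

lemma runAppend_inj_left {u v : List A} {ρ ρ' : Fin (u.length + 1) → Q}
    {σ σ' : Fin (v.length + 1) → Q}
    (h : runAppend u v ρ σ = runAppend u v ρ' σ') : ρ = ρ' := by
  funext i
  have hi : (i : ℕ) ≤ u.length := by omega
  have hj : (i : ℕ) < (u ++ v).length + 1 := by simp [List.length_append]; omega
  have := congrFun h ⟨(i : ℕ), hj⟩
  rw [runAppend_left _ _ _ _ _ hi, runAppend_left _ _ _ _ _ hi] at this
  simpa using this

lemma runAppend_inj_right {u v : List A} {ρ ρ' : Fin (u.length + 1) → Q}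
    {σ σ' : Fin (v.length + 1) → Q} (h0 : σ 0 = σ' 0)
    (h : runAppend u v ρ σ = runAppend u v ρ' σ') : σ = σ' := by
  funext j
  rcases Nat.eq_zero_or_pos (j : ℕ) with hj0 | hjpos
  · have : j = 0 := Fin.ext hj0
    rw [this]; exact h0
  · have hj : u.length + (j : ℕ) < (u ++ v).length + 1 := by
      have := j.2; simp [List.length_append]; omega
    have hns : ¬ ((u.length + (j : ℕ)) ≤ u.length) := by omega
    have := congrFun h ⟨u.length + (j : ℕ), hj⟩
    rw [runAppend_right _ _ _ _ _ hns, runAppend_right _ _ _ _ _ hns] at this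
    simpa using this

lemma runAppend_mem (M : NFA' Q A) {p m r : Q} {u v : List A}
    {ρ : Fin (u.length + 1) → Q} {σ : Fin (v.length + 1) → Q}
    (hρ : ρ ∈ M.Runs p m u) (hσ : σ ∈ M.Runs m r v) :
    runAppend u v ρ σ ∈ M.Runs p r (u ++ v) := by
  obtain ⟨hρ0, hρl, hρrun⟩ := hρ
  obtain ⟨hσ0, hσl, hσrun⟩ := hσ
  refine ⟨?_, ?_, ?_⟩
  · have h0 : runAppend u v ρ σ 0 = ρ ⟨0, by omega⟩ :=
      runAppend_left u v ρ σ 0 (by simp)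
    rw [h0]
    have : (⟨0, by omega⟩ : Fin (u.length + 1)) = 0 := rfl
    rw [this, hρ0]
  · have hlast : ((Fin.last (u ++ v).length : Fin ((u ++ v).length + 1)) : ℕ)
        = u.length + v.length := by simp [Fin.last, List.length_append]
    by_cases hv : v.length = 0
    · rw [runAppend_left u v ρ σ _ (by omega)]
      have : (⟨((Fin.last (u ++ v).length : Fin _) : ℕ), by omega⟩ : Fin (u.length + 1))
          = Fin.last u.length := by ext; simp [hlast, hv]
      rw [this, hρl]
      have : (Fin.last v.length : Fin (v.length + 1)) = 0 := by ext; simp [hv]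
      rw [this, hσ0] at hσl
      exact hσl
    · rw [runAppend_right u v ρ σ _ (by omega)]
      have : (⟨((Fin.last (u ++ v).length : Fin _) : ℕ) - u.length, by
          have := (Fin.last (u ++ v).length).2
          simp only [List.length_append] at this; omega⟩ : Fin (v.length + 1))
          = Fin.last v.length := by ext; simp [hlast]
      rw [this, hσl]
  · intro i
    have hi : (i : ℕ) < u.length + v.length := by
      have := i.2; simpa [List.length_append] using this
    by_cases hc : (i : ℕ) + 1 ≤ u.length
    · -- entirely inside u
      rw [runAppend_left u v ρ σ i.castSucc (by simp; omega),
          runAppend_left u v ρ σ i.succ (by simp; omega)]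
      have hget : (u ++ v).get i = u.get ⟨(i : ℕ), by omega⟩ := by
        simp [List.get_eq_getElem]
        rw [List.getElem_append_left (by omega)]
      rw [hget]
      have := hρrun ⟨(i : ℕ), by omega⟩
      convert this using 2
      · congr 1
      · ext; simp
    · -- inside v (possibly bridging at i = u.length)
      have hiu : u.length ≤ (i : ℕ) := by omega
      have hsuccne : ¬ ((i.succ : ℕ) ≤ u.length) := by simp; omega
      rw [runAppend_right u v ρ σ i.succ hsuccne]
      have hgetv : (u ++ v).get i = v.get ⟨(i : ℕ) - u.length, by omega⟩ := by
        simp [List.get_eq_getElem]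
        rw [List.getElem_append_right (by omega)]
      have hcast : runAppend u v ρ σ i.castSucc
          = σ ⟨(i : ℕ) - u.length, by omega⟩ := by
        by_cases he : (i : ℕ) = u.length
        · rw [runAppend_left u v ρ σ i.castSucc (by simp; omega)]
          have h1 : (⟨((i.castSucc : Fin _) : ℕ), by simp; omega⟩ : Fin (u.length + 1))
              = Fin.last u.length := by ext; simp [he]
          have h2 : (⟨(i : ℕ) - u.length, by omega⟩ : Fin (v.length + 1)) = 0 := by
            ext; simp [he]
          rw [h1, hρl, h2, hσ0]
        · rw [runAppend_right u v ρ σ i.castSucc (by simp; omega)]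
          congr 1
      rw [hcast, hgetv]
      have := hσrun ⟨(i : ℕ) - u.length, by omega⟩
      convert this using 2
      · congr 1
      · ext; simp <;> omega

/-- A run along `wordPow s k` choosing loop `ρ₁` or `ρ₂` at each stage according to `b`. -/
def loopRun (s : List A) (ρ₁ ρ₂ : Fin (s.length + 1) → Q) (q : Q) :
    ∀ k : ℕ, (Fin k → Bool) → Fin ((wordPow s k).length + 1) → Q
  | 0, _ => fun _ => q
  | (k + 1), b =>
      runAppend s (wordPow s k) (if b 0 then ρ₁ else ρ₂)
        (loopRun s ρ₁ ρ₂ q k (fun i => b i.succ))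

lemma loopRun_mem (M : NFA' Q A) {q : Q} {s : List A} {ρ₁ ρ₂ : Fin (s.length + 1) → Q}
    (h1 : ρ₁ ∈ M.Runs q q s) (h2 : ρ₂ ∈ M.Runs q q s) :
    ∀ (k : ℕ) (b : Fin k → Bool), loopRun s ρ₁ ρ₂ q k b ∈ M.Runs q q (wordPow s k)
  | 0, _ => ⟨rfl, rfl, fun i => i.elim0⟩
  | (k + 1), b => by
      have := runAppend_mem M (p := q) (m := q) (r := q)
        (ρ := if b 0 then ρ₁ else ρ₂) (σ := loopRun s ρ₁ ρ₂ q k (fun i => b i.succ))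
        (by split <;> assumption) (loopRun_mem M h1 h2 k _)
      exact this

lemma loopRun_inj (M : NFA' Q A) {q : Q} {s : List A} {ρ₁ ρ₂ : Fin (s.length + 1) → Q}
    (h1 : ρ₁ ∈ M.Runs q q s) (h2 : ρ₂ ∈ M.Runs q q s) (hne : ρ₁ ≠ ρ₂) :
    ∀ k : ℕ, Function.Injective (loopRun s ρ₁ ρ₂ q k)
  | 0 => by intro b b' _; funext i; exact i.elim0
  | (k + 1) => by
      intro b b' h
      have hL := runAppend_inj_left h
      have hb0 : b 0 = b' 0 := by
        by_contra hne0
        rcases Bool.eq_false_or_eq_true (b 0) with hb | hb <;>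
          rcases Bool.eq_false_or_eq_true (b' 0) with hb' | hb'
        · exact hne0 (hb.trans hb'.symm)
        · rw [hb, hb'] at hL; simp at hL; exact hne hL
        · rw [hb, hb'] at hL; simp at hL; exact hne hL.symm
        · exact hne0 (hb.trans hb'.symm)
      have h0 : loopRun s ρ₁ ρ₂ q k (fun i => b i.succ) 0
          = loopRun s ρ₁ ρ₂ q k (fun i => b' i.succ) 0 := by
        rw [(loopRun_mem M h1 h2 k _).1, (loopRun_mem M h1 h2 k _).1]
      have hR := runAppend_inj_right h0 h
      have htail := loopRun_inj M h1 h2 hne k hR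
      funext i
      refine Fin.cases ?_ ?_ i
      · exact hb0
      · intro j; exact congrFun htail j

/-- Every complete NFA has a run from any state labeled by any word. -/
lemma exists_run (M : NFA' Q A) (hc : ∀ (p : Q) (a : A), (M.δ p a).Nonempty) :
    ∀ (w : List A) (p : Q), ∃ (r : Q) (ρ : Fin (w.length + 1) → Q), ρ ∈ M.Runs p r w
  | [], p => ⟨p, fun _ => p, rfl, rfl, fun i => i.elim0⟩
  | (a :: t), p => by
      obtain ⟨r', hr'⟩ := hc p a
      obtain ⟨r, σ, hσ⟩ := exists_run M hc t r'
      refine ⟨r, runAppend [a] t ![p, r'] σ, ?_⟩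
      have h1 : ![p, r'] ∈ M.Runs p r' [a] := by
        refine ⟨rfl, rfl, fun i => ?_⟩
        fin_cases i
        simpa using hr'
      exact runAppend_mem M h1 hσ

end Aux

/-- For a complete NFA with finitely many states: if `q` is reachable from `q0` via `s0`,
there are two distinct loops at `q` labeled by `s`, and no run from `q` labeled by `s1`
ends in an accepting state, then for every `k` some non-accepting state `q_r` admits at
least `2^k / |Q|` distinct runs from `q0` labeled by `s0 · s^k · s1`. -/
theorem hyperVulnerable_exponential_runs_of_complete {Q A : Type*} [Fintype Q]
    (M : NFA' Q A) (hcomplete : ∀ (p : Q) (a : A), (M.δ p a).Nonempty)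
    (q : Q) (s₀ s s₁ : List A)
    (hpre : (M.Runs M.q0 q s₀).Nonempty)
    (hcore : ∃ ρ₁ ρ₂, ρ₁ ∈ M.Runs q q s ∧ ρ₂ ∈ M.Runs q q s ∧ ρ₁ ≠ ρ₂)
    (hsuf : ∀ r : Q, r ∈ M.F → M.Runs q r s₁ = ∅) :
    ∀ k : ℕ, ∃ qr : Q, qr ∉ M.F ∧
      ((2 ^ k / Fintype.card Q : ℕ) : ℕ∞) ≤
        (M.Runs M.q0 qr (s₀ ++ wordPow s k ++ s₁)).encard := by
  intro k
  obtain ⟨ρ0, hρ0⟩ := hpre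
  obtain ⟨ρ₁, ρ₂, h1, h2, hne⟩ := hcore
  obtain ⟨qr, σ1, hσ1⟩ := exists_run M hcomplete s₁ q
  have hqr : qr ∉ M.F := fun hmem => by
    have := hsuf qr hmem
    rw [this] at hσ1
    exact Set.notMem_empty _ hσ1
  refine ⟨qr, hqr, ?_⟩
  let Φ : (Fin k → Bool) → Fin ((s₀ ++ wordPow s k ++ s₁).length + 1) → Q :=
    fun b => runAppend (s₀ ++ wordPow s k) s₁
      (runAppend s₀ (wordPow s k) ρ0 (loopRun s ρ₁ ρ₂ q k b)) σ1
  have hmem : ∀ b, Φ b ∈ M.Runs M.q0 qr (s₀ ++ wordPow s k ++ s₁) :=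
    fun b => runAppend_mem M (runAppend_mem M hρ0 (loopRun_mem M h1 h2 k b)) hσ1
  have hinj : Function.Injective Φ := by
    intro b b' h
    have h' := runAppend_inj_left h
    have h0 : loopRun s ρ₁ ρ₂ q k b 0 = loopRun s ρ₁ ρ₂ q k b' 0 := by
      rw [(loopRun_mem M h1 h2 k b).1, (loopRun_mem M h1 h2 k b').1]
    exact loopRun_inj M h1 h2 hne k (runAppend_inj_right h0 h')
  calc ((2 ^ k / Fintype.card Q : ℕ) : ℕ∞) ≤ ((2 ^ k : ℕ) : ℕ∞) := by
        exact_mod_cast Nat.div_le_self _ _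
    _ = (Set.univ : Set (Fin k → Bool)).encard := by
        rw [Set.encard_univ]
        simp [ENat.card_eq_coe_fintype_card]
    _ = (Φ '' Set.univ).encard := (Set.InjOn.encard_image hinj.injOn).symm
    _ ≤ _ := Set.encard_mono (by rintro x ⟨b, -, rfl⟩; exact hmem b)
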